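/- For all u ∈ (0,1), ln(u)·ln(1-u) ≤ (ln 2)², with equality if and only if u = 1/2. -/

import Mathlib

open Real

/-- For `0 < x < y < 1` with `x + y = 1`, `x * log x < y * log y`. -/
lemma key_lt {x : ℝ} (hx0 : 0 < x) (hx : x < 1/2) :
    x * Real.log x < (1 - x) * Real.log (1 - x) := by
  obtain ⟨y, hy⟩ : ∃ y : ℝ, y = 1 - x := ⟨_, rfl⟩
  rw [← hy]
  have hxy : x < y := by rw [hy]; linarith
  have hy1 : y < 1 := by rw [hy]; linarith
  have hy0 : 0 < y := lt_trans hx0 hxy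
  have hxabs : |x| < 1 := by rw [abs_of_pos hx0]; linarith
  have hyabs : |y| < 1 := by rw [abs_of_pos hy0]; linarith
  have h1 : HasSum (fun n : ℕ => y ^ (n+1) / (n+1)) (-Real.log x) := by
    have := Real.hasSum_pow_div_log_of_abs_lt_one hyabs
    have hxy' : 1 - y = x := by rw [hy]; ring
    rwa [hxy'] at this
  have h2 : HasSum (fun n : ℕ => x ^ (n+1) / (n+1)) (-Real.log y) := by
    have := Real.hasSum_pow_div_log_of_abs_lt_one hxabs
    rwa [← hy] at this
  have h1' : HasSum (fun n : ℕ => x * (y ^ (n+1) / (n+1))) (x * (-Real.log x)) :=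
    h1.mul_left x
  have h2' : HasSum (fun n : ℕ => y * (x ^ (n+1) / (n+1))) (y * (-Real.log y)) :=
    h2.mul_left y
  have hle : ∀ n : ℕ, y * (x ^ (n+1) / (n+1)) ≤ x * (y ^ (n+1) / (n+1)) := by
    intro n
    rw [mul_div_assoc', mul_div_assoc', div_le_div_iff₀ (by positivity) (by positivity)]
    have hpow : x ^ n ≤ y ^ n := pow_le_pow_left₀ hx0.le hxy.le n
    have : y * x ^ (n+1) ≤ x * y ^ (n+1) := by
      calc y * x ^ (n+1) = (x * y) * x ^ n := by ring
        _ ≤ (x * y) * y ^ n := by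
            exact mul_le_mul_of_nonneg_left hpow (by positivity)
        _ = x * y ^ (n+1) := by ring
    nlinarith [Nat.cast_nonneg (α := ℝ) n]
  have hstrict : y * (x ^ (1+1) / ((1:ℕ)+1)) < x * (y ^ (1+1) / ((1:ℕ)+1)) := by
    push_cast
    have h := mul_lt_mul_of_pos_left hxy (mul_pos hx0 hy0)
    have e1 : y * (x ^ (1+1) / ((1:ℝ)+1)) = (x*y*x)/2 := by ring
    have e2 : x * (y ^ (1+1) / ((1:ℝ)+1)) = (x*y*y)/2 := by ring
    rw [e1, e2]
    linarith
  have hlt : y * (-Real.log y) < x * (-Real.log x) := hasSum_lt hle hstrict h2' h1'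
  nlinarith [hlt]

lemma f_hasDeriv {x : ℝ} (hx0 : 0 < x) (hx1 : x < 1) :
    HasDerivAt (fun u => Real.log u * Real.log (1 - u))
      (Real.log (1 - x) / x - Real.log x / (1 - x)) x := by
  have h1x : (1:ℝ) - x ≠ 0 := by linarith
  have h1 : HasDerivAt Real.log x⁻¹ x := Real.hasDerivAt_log (ne_of_gt hx0)
  have h2 : HasDerivAt (fun u : ℝ => 1 - u) (-1) x := by
    simpa using (hasDerivAt_id x).const_sub 1
  have h3 : HasDerivAt (fun u : ℝ => Real.log (1 - u)) (((1:ℝ) - x)⁻¹ * (-1)) x :=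
    (Real.hasDerivAt_log h1x).comp x h2
  have : HasDerivAt (fun u => Real.log u * Real.log (1 - u))
      (x⁻¹ * Real.log (1 - x) + Real.log x * (((1:ℝ) - x)⁻¹ * (-1))) x := h1.mul h3
  convert this using 1
  field_simp
  ring

lemma main_lt {v : ℝ} (hv0 : 0 < v) (hv : v < 1/2) :
    Real.log v * Real.log (1 - v) < (Real.log 2) ^ 2 := by
  have hmono : StrictMonoOn (fun u => Real.log u * Real.log (1 - u))
      (Set.Icc v (1/2)) := by
    apply strictMonoOn_of_deriv_pos (convex_Icc _ _)
    · intro x hx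
      have hx0 : 0 < x := lt_of_lt_of_le hv0 hx.1
      have hx1 : x < 1 := lt_of_le_of_lt hx.2 (by norm_num)
      exact (f_hasDeriv hx0 hx1).continuousAt.continuousWithinAt
    · intro x hx
      rw [interior_Icc] at hx
      have hx0 : 0 < x := lt_trans hv0 hx.1
      have hx2 : x < 1/2 := hx.2
      have hx1 : x < 1 := by linarith
      rw [(f_hasDeriv hx0 hx1).deriv]
      have hkey := key_lt hx0 hx2
      rw [sub_pos, div_lt_div_iff₀ (by linarith) hx0]
      nlinarith
  have h12 : (1:ℝ)/2 ∈ Set.Icc v (1/2) := by constructor <;> linarith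
  have hv' : v ∈ Set.Icc v (1/2) := by constructor <;> linarith
  have := hmono hv' h12 hv
  simp only at this
  have hhalf : Real.log (1/2) * Real.log (1 - 1/2) = (Real.log 2) ^ 2 := by
    rw [show (1:ℝ) - 1/2 = 1/2 by norm_num, one_div, Real.log_inv]
    ring
  linarith [hhalf ▸ this]

/-- For all `u ∈ (0,1)`, `ln(u)·ln(1-u) ≤ (ln 2)²`, with equality iff `u = 1/2`. -/
theorem log_mul_log_le (u : ℝ) (hu : u ∈ Set.Ioo (0 : ℝ) 1) :
    Real.log u * Real.log (1 - u) ≤ (Real.log 2) ^ 2 ∧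
    (Real.log u * Real.log (1 - u) = (Real.log 2) ^ 2 ↔ u = 1 / 2) := by
  obtain ⟨hu0, hu1⟩ := hu
  have hhalf : Real.log (1/2) * Real.log (1 - 1/2) = (Real.log 2) ^ 2 := by
    rw [show (1:ℝ) - 1/2 = 1/2 by norm_num, one_div, Real.log_inv]
    ring
  have hlt : u ≠ 1/2 → Real.log u * Real.log (1 - u) < (Real.log 2) ^ 2 := by
    intro hne
    rcases lt_or_gt_of_ne hne with h | h
    · exact main_lt hu0 h
    · have := main_lt (v := 1 - u) (by linarith) (by linarith)
      have h1u : 1 - (1 - u) = u := by ring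
      rw [h1u] at this
      linarith [this, mul_comm (Real.log (1 - u)) (Real.log u)]
  by_cases hne : u = 1/2
  · subst hne
    exact ⟨le_of_eq hhalf, ⟨fun _ => rfl, fun _ => hhalf⟩⟩
  · have := hlt hne
    exact ⟨le_of_lt this, by constructor <;> intro h <;> [linarith; exact absurd h hne]⟩
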